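/- Fix an integer r ≥ 2. As ε → 0⁺, with λ = 1 + ε, the quantity ρ_{r,λ} defined by 1 - ρ_{r,λ} = (1 - ρ_λ)^{1/(r-1)} satisfies ρ_{r,λ} = (2/(r-1))ε - (2(r+2)/(3(r-1)²))ε² + O(ε³); in particular ρ_{r,λ} ~ 2ε/(r-1). -/

import Mathlib

open Real Finset

/-- Cubic lower bound for `-log(1-x)` on `[0,1)`. -/
lemma log_lower {x : ℝ} (hx0 : 0 ≤ x) (hx1 : x < 1) :
    x + x^2/2 + x^3/3 ≤ -Real.log (1 - x) := by
  set f : ℝ → ℝ := fun t => -Real.log (1 - t) - (t + t^2/2 + t^3/3) with hf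
  have hder : ∀ y : ℝ, y < 1 → HasDerivAt f (1/(1-y) - (1 + y + y^2)) y := by
    intro y hy
    have h1y : (1:ℝ) - y ≠ 0 := by intro h; linarith [h]
    have h1 : HasDerivAt (fun t : ℝ => 1 - t) (-1) y := by
      simpa using (hasDerivAt_id y).const_sub 1
    have h2 : HasDerivAt (fun t : ℝ => Real.log (1 - t)) ((1-y)⁻¹ * (-1)) y :=
      (Real.hasDerivAt_log h1y).comp y h1
    have h3 : HasDerivAt (fun t : ℝ => t + t^2/2 + t^3/3) (1 + (2*y^1)/2 + (3*y^2)/3) y :=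
      ((hasDerivAt_id y).add ((hasDerivAt_pow 2 y).div_const 2)).add
        ((hasDerivAt_pow 3 y).div_const 3)
    have := (h2.neg).sub h3
    exact this.congr_deriv (by ring)
  have hmono : MonotoneOn f (Set.Icc 0 x) := by
    apply monotoneOn_of_deriv_nonneg (convex_Icc 0 x)
    · intro y hy
      exact (hder y (lt_of_le_of_lt hy.2 hx1)).continuousAt.continuousWithinAt
    · intro y hy
      rw [interior_Icc] at hy
      exact (hder y (lt_of_lt_of_le hy.2 hx1.le)).differentiableAt.differentiableWithinAt
    · intro y hy
      rw [interior_Icc] at hy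
      have hylt : y < 1 := lt_of_lt_of_le hy.2 hx1.le
      rw [(hder y hylt).deriv]
      have h1y : 0 < 1 - y := by linarith
      rw [sub_nonneg, le_div_iff₀ h1y]
      nlinarith [pow_nonneg hy.1.le 3]
  have h0 : f 0 = 0 := by simp [hf]
  have hle : f 0 ≤ f x :=
    hmono (Set.left_mem_Icc.mpr hx0) (Set.right_mem_Icc.mpr hx0) hx0
  rw [h0, hf] at hle
  simp only [sub_nonneg] at hle
  linarith

set_option maxHeartbeats 4000000 in
theorem rho_r_expansion (r : ℕ) (hr : 2 ≤ r) :
    ∃ C ε₀ : ℝ, 0 < C ∧ 0 < ε₀ ∧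
      ∀ ε ρ ρr : ℝ, 0 < ε → ε < ε₀ →
        0 < ρ → ρ < 1 → 1 - ρ = Real.exp (-((1 + ε) * ρ)) →
        1 - ρr = (1 - ρ) ^ ((1 : ℝ) / (r - 1)) →
        |ρr - (2 / (r - 1) * ε - 2 * (r + 2) / (3 * (r - 1) ^ 2) * ε ^ 2)| ≤ C * ε ^ 3 := by
  refine ⟨100, 1/100, by norm_num, by norm_num, ?_⟩
  intro ε ρ ρr hε hεs hρ0 hρ1 heq hrr
  have hr1 : (1:ℝ) ≤ (r:ℝ) - 1 := by
    have : (2:ℝ) ≤ (r:ℝ) := by exact_mod_cast hr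
    linarith
  set s : ℝ := 1/((r:ℝ)-1) with hs
  have hs0 : 0 < s := by rw [hs]; positivity
  have hs1 : s ≤ 1 := by rw [hs, div_le_one (by linarith)]; linarith
  have h1ρ : 0 < 1 - ρ := by linarith
  have hlog : Real.log (1 - ρ) = -((1+ε)*ρ) := by rw [heq, Real.log_exp]
  -- a priori bound ρ ≤ 2ε
  have hA := log_lower hρ0.le hρ1
  rw [hlog, neg_neg] at hA
  have hρ2ε : ρ ≤ 2*ε := by nlinarith [pow_nonneg hρ0.le 3]
  -- remainder of cubic log expansion
  set R : ℝ := (1+ε)*ρ - (ρ + ρ^2/2 + ρ^3/3) with hR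
  have hRb : |R| ≤ 2*ρ^4 := by
    have habs := Real.abs_log_sub_add_sum_range_le
      (x := ρ) (by rw [abs_of_nonneg hρ0.le]; linarith) 3
    rw [abs_of_nonneg hρ0.le] at habs
    have hsum : (∑ i ∈ Finset.range 3, ρ^(i+1)/((i:ℝ)+1)) = ρ + ρ^2/2 + ρ^3/3 := by
      simp [Finset.sum_range_succ]
      norm_num
    rw [hsum, hlog] at habs
    have h2 : |R| = |ρ + ρ^2/2 + ρ^3/3 + -((1+ε)*ρ)| := by
      rw [hR, abs_sub_comm]
      ring_nf
    rw [h2]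
    have h3 : ρ^4/(1-ρ) ≤ 2*ρ^4 := by
      rw [div_le_iff₀ h1ρ]
      nlinarith [pow_nonneg hρ0.le 4]
    linarith
  obtain ⟨hRl, hRu⟩ := abs_le.mp hRb
  -- ε = ρ/2 + ρ²/3 + Q  with Q = R/ρ
  set Q : ℝ := R/ρ with hQ
  have hQb : |Q| ≤ 2*ρ^3 := by
    rw [hQ, abs_div, abs_of_pos hρ0, div_le_iff₀ hρ0]
    calc |R| ≤ 2*ρ^4 := hRb
      _ = 2*ρ^3*ρ := by ring
  obtain ⟨hQl, hQu⟩ := abs_le.mp hQb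
  have hε_eq : ε = ρ/2 + ρ^2/3 + Q := by
    have hQρ : Q * ρ = R := by
      rw [hQ]; field_simp
    have hkey : ε*ρ = (ρ/2 + ρ^2/3 + Q)*ρ := by
      linear_combination (-1:ℝ)*hR - hQρ
    exact mul_right_cancel₀ hρ0.ne' hkey
  have hρ3 : ρ^3 ≤ 8*ε^3 := by nlinarith [pow_le_pow_left₀ hρ0.le hρ2ε 3]
  have hρ2 : ρ^2 ≤ 4*ε^2 := by nlinarith [pow_le_pow_left₀ hρ0.le hρ2ε 2]
  have hε3 : ε^3 ≤ ε^2/100 := by nlinarith [mul_le_mul_of_nonneg_right hεs.le (sq_nonneg ε)]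
  have hε4 : ε^4 ≤ ε^3/100 := by nlinarith [mul_le_mul_of_nonneg_right hεs.le (pow_nonneg hε.le 3), pow_pos hε 3]
  -- |ρ - 2ε| ≤ 3ε²
  have hD2 : |ρ - 2*ε| ≤ 3*ε^2 := by
    have hiden : ρ - 2*ε = -(2*ρ^2/3 + 2*Q) := by linarith [hε_eq]
    rw [hiden, abs_neg, abs_le]
    constructor <;> linarith [pow_nonneg hρ0.le 3, pow_nonneg hρ0.le 2, sq_nonneg ε]
  obtain ⟨hD2l, hD2u⟩ := abs_le.mp hD2
  -- |ρ - (2ε - 8/3 ε²)| ≤ 40 ε³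
  have hD1 : |ρ - (2*ε - 8/3*ε^2)| ≤ 40*ε^3 := by
    have hiden : ρ - (2*ε - 8/3*ε^2) = 2/3*((2*ε-ρ)*(2*ε+ρ)) - 2*Q := by
      linear_combination (-2 : ℝ) * hε_eq
    have hprod : |(2*ε-ρ)*(2*ε+ρ)| ≤ 12*ε^3 := by
      rw [abs_mul, abs_sub_comm]
      have h1 : |2*ε+ρ| ≤ 4*ε := by
        rw [abs_of_pos (by linarith)]; linarith
      calc |ρ - 2*ε| * |2*ε+ρ| ≤ (3*ε^2) * (4*ε) :=
            mul_le_mul hD2 h1 (abs_nonneg _) (by positivity)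
        _ = 12*ε^3 := by ring
    obtain ⟨hpl, hpu⟩ := abs_le.mp hprod
    rw [hiden, abs_le]
    constructor <;> linarith [hρ3, pow_nonneg hρ0.le 3]
  obtain ⟨hD1l, hD1u⟩ := abs_le.mp hD1
  -- express ρr through exp
  set y : ℝ := s*(1+ε)*ρ with hy
  have hρr : 1 - ρr = Real.exp (-y) := by
    rw [hrr, Real.rpow_def_of_pos h1ρ, hlog, hy, hs]
    congr 1
    ring
  have hy0 : 0 ≤ y := by rw [hy]; positivity
  have hyle : y ≤ 2.02*ε := by
    rw [hy]
    calc s*(1+ε)*ρ ≤ 1*(1+ε)*(2*ε) := by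
          apply mul_le_mul _ hρ2ε hρ0.le (by positivity)
          apply mul_le_mul hs1 le_rfl (by linarith) zero_le_one
      _ ≤ 2.02*ε := by nlinarith
  have hy1 : |(-y)| ≤ 1 := by
    rw [abs_neg, abs_of_nonneg hy0]; nlinarith
  -- E := ρr - (y - y²/2), |E| ≤ 2ε³
  set E : ℝ := ρr - (y - y^2/2) with hE
  have hEb : |E| ≤ 2*ε^3 := by
    have hexp := Real.exp_bound (x := -y) hy1 (n := 3) (by norm_num)
    have hsum : (∑ m ∈ Finset.range 3, (-y)^m / (m.factorial : ℝ)) = 1 - y + y^2/2 := by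
      simp [Finset.sum_range_succ, Nat.factorial]
      ring
    rw [hsum, abs_neg, abs_of_nonneg hy0] at hexp
    have h2 : |E| = |Real.exp (-y) - (1 - y + y^2/2)| := by
      rw [hE, ← hρr, abs_sub_comm]
      ring_nf
    rw [h2]
    have h3 : y^3 * ((3:ℕ).succ / ((3:ℕ).factorial * (3:ℕ)) : ℝ) ≤ 2*ε^3 := by
      norm_num [Nat.factorial]
      nlinarith [pow_le_pow_left₀ hy0 hyle 3, pow_nonneg hy0 3]
    linarith [hexp]
  obtain ⟨hEl, hEu⟩ := abs_le.mp hEb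
  -- bound each piece
  have hB1 : |s*(ρ - (2*ε - 8/3*ε^2))| ≤ 40*ε^3 := by
    rw [abs_mul, abs_of_pos hs0]
    calc s * |ρ - (2*ε - 8/3*ε^2)| ≤ 1 * (40*ε^3) :=
          mul_le_mul hs1 hD1 (abs_nonneg _) zero_le_one
      _ = 40*ε^3 := by ring
  obtain ⟨hB1l, hB1u⟩ := abs_le.mp hB1
  have hB2 : |s*ε*(ρ - 2*ε)| ≤ 3*ε^3 := by
    rw [abs_mul, abs_mul, abs_of_pos hs0, abs_of_pos hε]
    calc s * ε * |ρ - 2*ε| ≤ 1 * ε * (3*ε^2) := by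
          apply mul_le_mul _ hD2 (abs_nonneg _) (by positivity)
          apply mul_le_mul hs1 le_rfl hε.le zero_le_one
      _ = 3*ε^3 := by ring
  obtain ⟨hB2l, hB2u⟩ := abs_le.mp hB2
  have hD3 : |(1+ε)^2*ρ^2 - 4*ε^2| ≤ 21*ε^3 := by
    have hiden : (1+ε)^2*ρ^2 - 4*ε^2
        = (1+ε)^2*((ρ-2*ε)*(ρ+2*ε)) + (2*ε+ε^2)*(4*ε^2) := by ring
    have hprod : |(ρ-2*ε)*(ρ+2*ε)| ≤ 12*ε^3 := by
      rw [abs_mul]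
      have h1 : |ρ+2*ε| ≤ 4*ε := by
        rw [abs_of_pos (by linarith)]; linarith
      calc |ρ-2*ε| * |ρ+2*ε| ≤ (3*ε^2) * (4*ε) :=
            mul_le_mul hD2 h1 (abs_nonneg _) (by positivity)
        _ = 12*ε^3 := by ring
    have hsq : |(1+ε)^2| ≤ 1.03 := by
      rw [abs_of_pos (by positivity)]
      have hε2 : ε^2 ≤ 1/10000 := by
        rw [pow_two]
        calc ε*ε ≤ (1/100)*(1/100) := le_of_lt (mul_lt_mul'' hεs hεs hε.le hε.le)
          _ = 1/10000 := by norm_num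
      linarith [hε2]
    have hp2 : |(1+ε)^2*((ρ-2*ε)*(ρ+2*ε))| ≤ 1.03*(12*ε^3) := by
      rw [abs_mul]
      exact mul_le_mul hsq hprod (abs_nonneg _) (by norm_num)
    obtain ⟨hpl, hpu⟩ := abs_le.mp hp2
    rw [hiden, abs_le]
    constructor <;> linarith [hε4, pow_nonneg hε.le 4]
  have hB3 : |s^2/2*((1+ε)^2*ρ^2 - 4*ε^2)| ≤ 11*ε^3 := by
    rw [abs_mul]
    have h1 : |s^2/2| ≤ 1/2 := by
      rw [abs_of_pos (by positivity)]
      linarith [pow_le_one₀ hs0.le hs1 (n := 2)]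
    calc |s^2/2| * |(1+ε)^2*ρ^2 - 4*ε^2| ≤ (1/2) * (21*ε^3) :=
          mul_le_mul h1 hD3 (abs_nonneg _) (by norm_num)
      _ ≤ 11*ε^3 := by linarith [pow_pos hε 3]
  obtain ⟨hB3l, hB3u⟩ := abs_le.mp hB3
  -- rewrite target coefficients in terms of s
  have hrne : ((r:ℝ) - 1) ≠ 0 := ne_of_gt (by linarith)
  have hc1 : 2 / ((r:ℝ) - 1) = 2*s := by rw [hs]; ring
  have hc2 : 2 * ((r:ℝ) + 2) / (3 * ((r:ℝ) - 1) ^ 2) = 8/3*s - 2*s + 2*s^2 := by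
    rw [hs]
    field_simp
    ring
  rw [hc1, hc2]
  -- final identity
  have hfin : ρr - (2*s*ε - (8/3*s - 2*s + 2*s^2)*ε^2)
      = E + s*(ρ - (2*ε - 8/3*ε^2)) + s*ε*(ρ - 2*ε)
        - s^2/2*((1+ε)^2*ρ^2 - 4*ε^2) := by
    rw [hE, hy]; ring
  clear_value s R Q y E
  rw [hfin, abs_le]
  constructor <;> linarith [pow_pos hε 3]
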